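/- Residual minimization in the dual norm is equivalent to the mixed problem with optimal test functions: u_h ∈ U_h minimizes ‖Bu_h − l‖_{V'} if and only if b(u_h, R_V^{-1}(B w_h)) = l(R_V^{-1}(B w_h)) for all w_h ∈ U_h. -/

import Mathlib

open scoped InnerProductSpace

/-- Residual minimization in the dual norm is equivalent to the mixed problem with
optimal test functions. The test space `V` is identified with its dual via the Riesz
map `R_V`, so `B : U →L[ℂ] V` stands for `R_V⁻¹ ∘ B`, `L = R_V⁻¹ l`, and the optimal
test function of a trial function `w` is `B w = R_V⁻¹(B w)`. -/
theorem stmt3 {U V : Type*}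
    [NormedAddCommGroup U] [InnerProductSpace ℂ U] [CompleteSpace U]
    [NormedAddCommGroup V] [InnerProductSpace ℂ V] [CompleteSpace V]
    (B : U →L[ℂ] V) (b : U → V → ℂ)
    (hb : ∀ u v, b u v = ⟪v, B u⟫_ℂ)          -- b(u,v) = (R_V⁻¹ B u, v)_V
    (L : V) (l : V → ℂ)
    (hl : ∀ v, l v = ⟪v, L⟫_ℂ)                -- l(v) = (R_V⁻¹ l, v)_V
    (Uh : Submodule ℂ U) [FiniteDimensional ℂ Uh]
    (uh : U) (huh : uh ∈ Uh) :
    (∀ w ∈ Uh, ‖B uh - L‖ ≤ ‖B w - L‖) ↔ (∀ w ∈ Uh, b uh (B w) = l (B w)) := by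
  set K : Submodule ℂ V := Uh.map (B : U →ₗ[ℂ] V) with hK
  have hmem : B uh ∈ K := ⟨uh, huh, rfl⟩
  have key : (‖L - B uh‖ = ⨅ w : K, ‖L - w‖) ↔ ∀ w ∈ K, ⟪L - B uh, w⟫_ℂ = 0 :=
    Submodule.norm_eq_iInf_iff_inner_eq_zero K hmem
  constructor
  · intro h w hw
    have heq : ‖L - B uh‖ = ⨅ w : K, ‖L - w‖ := by
      apply le_antisymm
      · apply le_ciInf
        rintro ⟨x, u, hu, rfl⟩
        rw [norm_sub_rev, norm_sub_rev L]
        exact h u hu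
      · exact ciInf_le ⟨0, fun x ⟨w, hw⟩ => hw ▸ norm_nonneg _⟩ (⟨B uh, hmem⟩ : K)
    have h0 := key.1 heq (B w) ⟨w, hw, rfl⟩
    rw [hb, hl]
    have h1 : ⟪B w, L⟫_ℂ - ⟪B w, B uh⟫_ℂ = 0 := by
      have h2 := congrArg (starRingEnd ℂ) h0
      simpa [map_sub, inner_conj_symm, inner_sub_right] using h2
    linear_combination -h1
  · intro h w hw
    have h0 : ∀ k ∈ K, ⟪L - B uh, k⟫_ℂ = 0 := by
      rintro k ⟨x, hx, rfl⟩
      have hx1 := h x hx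
      rw [hb, hl] at hx1
      have h2 := congrArg (starRingEnd ℂ) hx1
      simp only [inner_conj_symm] at h2
      simp only [inner_sub_left, ContinuousLinearMap.coe_coe]
      linear_combination -h2
    have heq := key.2 h0
    have := ciInf_le (f := fun w : K => ‖L - (w : V)‖)
      ⟨0, fun x ⟨w, hw⟩ => hw ▸ norm_nonneg _⟩ (⟨B w, ⟨w, hw, rfl⟩⟩ : K)
    rw [← heq] at this
    rw [norm_sub_rev, norm_sub_rev (B w)]
    exact this
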